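/- arXiv:2302.00961 — 6 statements merged into one kernel-verified Lean document; each statement's English description precedes it below -/
import Mathlib

section
/- Let X ⊆ ℝⁿ be nonempty closed convex, X* ⊆ X nonempty closed convex, and let V : X → ℝ be convex and differentiable with V(x*) = 0 for all x* ∈ X*, V ≥ 0 on X. Suppose ⟨∇V(x*), z⟩ ≥ γ‖z‖ for all x* ∈ X* and all z ∈ T_X(x*) ∩ N_{X*}(x*), where γ > 0. Then V(x) ≥ γ·d(x, X*) for all x ∈ X. -/
open Metric

open Metric

/-- Gradient inequality for convex functions. -/
lemma convexOn_gradient_ineq {E : Type*} [NormedAddCommGroup E] [InnerProductSpace ℝ E] [CompleteSpace E]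
    {X : Set E} {V : E → ℝ} (hV : ConvexOn ℝ X V) {a b : E} (ha : a ∈ X) (hb : b ∈ X)
    {g : E} (hg : HasGradientAt V g a) :
    V a + (inner ℝ g (b - a) : ℝ) ≤ V b := by
  set v := b - a with hv
  have hL : ∀ t : ℝ, a + t • v = (1 - t) • a + t • b := by
    intro t; rw [hv]; module
  have hderiv : HasDerivAt (fun t : ℝ => V (a + t • v)) ((inner ℝ g v : ℝ)) 0 := by
    have hline : HasDerivAt (fun t : ℝ => a + t • v) v 0 := by
      simpa using ((hasDerivAt_id (0:ℝ)).smul_const v).const_add a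
    have hf : HasFDerivAt V ((InnerProductSpace.toDual ℝ E) g : E →L[ℝ] ℝ) (a + (0:ℝ) • v) := by
      simpa using hg.hasFDerivAt
    have h2 := hf.comp_hasDerivAt 0 hline
    simp at h2
    exact h2
  have hslope : Filter.Tendsto (slope (fun t : ℝ => V (a + t • v)) 0)
      (nhdsWithin 0 (Set.Ioi 0)) (nhds ((inner ℝ g v : ℝ))) :=
    ((hasDerivAt_iff_tendsto_slope.1 hderiv).mono_left
      (nhdsWithin_mono 0 (by intro t ht; exact ne_of_gt ht)))
  have hbound : ∀ᶠ t in nhdsWithin (0:ℝ) (Set.Ioi 0),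
      slope (fun t : ℝ => V (a + t • v)) 0 t ≤ V b - V a := by
    filter_upwards [Ioo_mem_nhdsGT_of_mem (by norm_num : (0:ℝ) ∈ Set.Ico 0 1)] with t ht
    have h01 : 0 < t ∧ t < 1 := ⟨ht.1, ht.2⟩
    have hconv := hV.2 ha hb (by linarith : (0:ℝ) ≤ 1 - t) h01.1.le (by ring)
    rw [slope_def_field]
    simp only [zero_smul, add_zero, sub_zero, hL t, smul_eq_mul] at *
    rw [div_le_iff₀ h01.1]
    nlinarith [hconv]
  have := le_of_tendsto hslope hbound
  linarith



/-- Polar of a set in a real inner product space. -/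
def polarSet {E : Type*} [NormedAddCommGroup E] [InnerProductSpace ℝ E] (S : Set E) : Set E :=
  {v | ∀ z ∈ S, (inner ℝ v z : ℝ) ≤ 0}

/-- Normal cone to a set `X` at a point `x`. -/
def normalCone {E : Type*} [NormedAddCommGroup E] [InnerProductSpace ℝ E]
    (X : Set E) (x : E) : Set E :=
  {v | ∀ z ∈ X, (inner ℝ v (z - x) : ℝ) ≤ 0}

/-- Tangent cone: polar of the normal cone. -/
def tangentConeSet {E : Type*} [NormedAddCommGroup E] [InnerProductSpace ℝ E]
    (X : Set E) (x : E) : Set E :=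
  polarSet (normalCone X x)

theorem stmt3 {n : ℕ} (X Xs : Set (EuclideanSpace ℝ (Fin n)))
    (hXne : X.Nonempty) (hXcl : IsClosed X) (hXconv : Convex ℝ X)
    (hXsne : Xs.Nonempty) (hXscl : IsClosed Xs) (hXsconv : Convex ℝ Xs) (hXsX : Xs ⊆ X)
    (V : EuclideanSpace ℝ (Fin n) → ℝ) (V' : EuclideanSpace ℝ (Fin n) → EuclideanSpace ℝ (Fin n))
    (hVconv : ConvexOn ℝ X V)
    (hVdiff : ∀ x ∈ X, HasGradientAt V (V' x) x)
    (hVzero : ∀ xs ∈ Xs, V xs = 0) (hVnonneg : ∀ x ∈ X, 0 ≤ V x)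
    (γ : ℝ) (hγ : 0 < γ)
    (hsharp : ∀ xs ∈ Xs, ∀ z ∈ tangentConeSet X xs ∩ normalCone Xs xs,
      γ * ‖z‖ ≤ (inner ℝ (V' xs) z : ℝ)) :
    ∀ x ∈ X, γ * Metric.infDist x Xs ≤ V x := by
  intro x hx
  obtain ⟨y, hyXs, hyd⟩ := hXscl.exists_infDist_eq_dist hXsne x
  have h1 : ‖x - y‖ = ⨅ w : Xs, ‖x - w‖ := by
    rw [← dist_eq_norm, ← hyd, Metric.infDist_eq_iInf]
    simp_rw [dist_eq_norm]
  have hnorm : x - y ∈ normalCone Xs y := by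
    intro w hw
    exact (norm_eq_iInf_iff_real_inner_le_zero hXsconv hyXs).1 h1 w hw
  have htang : x - y ∈ tangentConeSet X y := by
    intro v hv
    have := hv x hx
    rwa [real_inner_comm] at this
  have hkey := hsharp y hyXs (x - y) ⟨htang, hnorm⟩
  have hgrad := convexOn_gradient_ineq hVconv (hXsX hyXs) hx (hVdiff y (hXsX hyXs))
  rw [hVzero y hyXs, zero_add] at hgrad
  rw [hyd, dist_eq_norm]
  linarith
end

section
/- Let X ⊆ ℝⁿ be nonempty closed convex, X* ⊆ X closed convex, V : X → ℝ differentiable, with V(x*) = 0 for all x* ∈ X* and V(x) ≥ γ·d(x, X*) for all x ∈ X, where γ > 0. Then for every x* ∈ X* and every nonzero s ∈ T_X(x*) ∩ N_{X*}(x*), we have ⟨∇V(x*), s⟩ ≥ γ‖s‖. -/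
theorem stmt4 {n : ℕ} (X Xs : Set (EuclideanSpace ℝ (Fin n)))
    (hXne : X.Nonempty) (hXcl : IsClosed X) (hXconv : Convex ℝ X)
    (hXscl : IsClosed Xs) (hXsconv : Convex ℝ Xs) (hXsX : Xs ⊆ X)
    (V : EuclideanSpace ℝ (Fin n) → ℝ) (V' : EuclideanSpace ℝ (Fin n) → EuclideanSpace ℝ (Fin n))
    (hVdiff : ∀ x ∈ X, HasGradientAt V (V' x) x)
    (hVzero : ∀ xs ∈ Xs, V xs = 0)
    (γ : ℝ) (hγ : 0 < γ)
    (herr : ∀ x ∈ X, γ * Metric.infDist x Xs ≤ V x) :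
    ∀ xs ∈ Xs, ∀ s ∈ tangentConeSet X xs ∩ normalCone Xs xs, s ≠ 0 →
      γ * ‖s‖ ≤ (inner ℝ (V' xs) s : ℝ) := by
  intro xs hxs s hs hs0
  obtain ⟨hsT, hsN⟩ := hs
  have hsnorm : (0:ℝ) < ‖s‖ := norm_pos_iff.mpr hs0
  have hXsne : Xs.Nonempty := ⟨xs, hxs⟩
  have hxsX : xs ∈ X := hXsX hxs
  set g := V' xs with hg
  -- Step 1: separating hyperplane bound
  have step1 : ∀ y ∈ X, γ * (inner ℝ s (y - xs) : ℝ) ≤ ‖s‖ * V y := by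
    intro y hy
    have h1 : (inner ℝ s (y - xs) : ℝ) / ‖s‖ ≤ Metric.infDist y Xs := by
      rw [Metric.infDist_eq_iInf]
      haveI : Nonempty ↥Xs := hXsne.to_subtype
      refine le_ciInf fun zz => ?_
      obtain ⟨z, hz⟩ := zz
      have hsplit : (inner ℝ s (y - xs) : ℝ) = inner ℝ s (y - z) + (inner ℝ s (z - xs) : ℝ) := by
        rw [← inner_add_right]
        congr 1
        abel
      have h2 : (inner ℝ s (y - z) : ℝ) ≤ ‖s‖ * ‖y - z‖ := real_inner_le_norm s (y - z)
      have h3 : (inner ℝ s (z - xs) : ℝ) ≤ 0 := hsN z hz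
      rw [div_le_iff₀ hsnorm, dist_eq_norm]
      nlinarith
    have h1' : (inner ℝ s (y - xs) : ℝ) ≤ ‖s‖ * Metric.infDist y Xs := by
      rw [div_le_iff₀ hsnorm] at h1
      linarith [h1]
    have h4 := herr y hy
    nlinarith [Metric.infDist_nonneg (x := y) (s := Xs)]
  -- Step 2: directional derivative nonnegativity
  have step2 : ∀ x ∈ X, 0 ≤ ‖s‖ * (inner ℝ g (x - xs) : ℝ) - γ * (inner ℝ s (x - xs) : ℝ) := by
    intro x hx
    set a : ℝ := (inner ℝ s (x - xs) : ℝ) with ha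
    set b : ℝ := (inner ℝ g (x - xs) : ℝ) with hb
    set φ : ℝ → ℝ := fun τ => ‖s‖ * V (xs + τ • (x - xs)) - γ * (τ * a) with hφdef
    have hc : HasDerivAt (fun τ : ℝ => xs + τ • (x - xs)) (x - xs) 0 := by
      simpa using (((hasDerivAt_id (0:ℝ)).smul_const (x - xs)).const_add xs)
    have hVc : HasDerivAt (fun τ : ℝ => V (xs + τ • (x - xs))) b 0 := by
      have h0 : ((0:ℝ) • (x - xs) + xs) = xs := by simp
      have hfd := (hVdiff xs hxsX).hasFDerivAt
      have hfd' : HasFDerivAt V ((InnerProductSpace.toDual ℝ (EuclideanSpace ℝ (Fin n))) (V' xs))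
          (xs + (0:ℝ) • (x - xs)) := by simpa using hfd
      have := hfd'.comp_hasDerivAt (0:ℝ) hc
      simpa [hb, hg, Function.comp_def, InnerProductSpace.toDual_apply_apply] using this
    have hlin : HasDerivAt (fun τ : ℝ => γ * (τ * a)) (γ * a) 0 := by
      simpa using (((hasDerivAt_id (0:ℝ)).mul_const a).const_mul γ)
    have hφ : HasDerivAt φ (‖s‖ * b - γ * a) 0 := (hVc.const_mul ‖s‖).sub hlin
    have hφ0 : φ 0 = 0 := by
      simp [hφdef, hVzero xs hxs]
    have hnonneg : ∀ τ ∈ Set.Ioc (0:ℝ) 1, 0 ≤ φ τ := by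
      intro τ hτ
      have hmem : xs + τ • (x - xs) ∈ X := by
        have := hXconv hxsX hx (by linarith [hτ.2] : (0:ℝ) ≤ 1 - τ) (le_of_lt hτ.1) (by ring)
        convert this using 1
        simp [smul_sub, sub_smul]
        abel
      have h5 := step1 _ hmem
      have h6 : (inner ℝ s ((xs + τ • (x - xs)) - xs) : ℝ) = τ * a := by
        rw [ha]
        rw [add_sub_cancel_left, real_inner_smul_right]
      rw [h6] at h5
      simp only [hφdef]
      linarith
    -- derivative of φ at 0 from the right is ≥ 0
    have hslope : Filter.Tendsto (slope φ 0) (nhdsWithin 0 (Set.Ioi 0)) (nhds (‖s‖ * b - γ * a)) := by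
      have h7 := hasDerivAt_iff_tendsto_slope.mp hφ
      exact h7.mono_left (nhdsWithin_mono _ (fun y hy => ne_of_gt hy))
    have h8 : 0 ≤ ‖s‖ * b - γ * a := by
      refine ge_of_tendsto hslope ?_
      filter_upwards [Ioo_mem_nhdsGT_of_mem (by norm_num : (0:ℝ) ∈ Set.Ico 0 1)] with τ hτ
      have h9 := hnonneg τ ⟨hτ.1, le_of_lt hτ.2⟩
      have h10 : slope φ 0 τ = φ τ / τ := by
        rw [slope_def_field, hφ0]
        ring_nf
      rw [h10]
      exact div_nonneg h9 (le_of_lt hτ.1)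

    exact h8
  -- Step 3: conclude via the tangent cone (polar of normal cone)
  have hwN : (γ • s - ‖s‖ • g) ∈ normalCone X xs := by
    intro z hz
    have h11 := step2 z hz
    have : (inner ℝ (γ • s - ‖s‖ • g) (z - xs) : ℝ)
        = γ * (inner ℝ s (z - xs) : ℝ) - ‖s‖ * (inner ℝ g (z - xs) : ℝ) := by
      rw [inner_sub_left, real_inner_smul_left, real_inner_smul_left]
    rw [this]
    linarith
  have h12 : (inner ℝ s (γ • s - ‖s‖ • g) : ℝ) ≤ 0 := hsT _ hwN
  have h13 : (inner ℝ s (γ • s - ‖s‖ • g) : ℝ)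
      = γ * (‖s‖ * ‖s‖) - ‖s‖ * (inner ℝ s g : ℝ) := by
    rw [inner_sub_right, real_inner_smul_right, real_inner_smul_right,
      real_inner_self_eq_norm_mul_norm]
  rw [h13] at h12
  have h14 : (inner ℝ g s : ℝ) = (inner ℝ s g : ℝ) := real_inner_comm s g
  rw [hg] at h14 ⊢
  rw [h14]
  nlinarith
end

section
/- For the regularized Nikaido–Isoda function ψ_a of a jointly convex GNEP with ψ_a(·,y) convex for each y ∈ X: for every normalized Nash equilibrium x* ∈ X* and every x ∈ X, ψ_a(x, x*) ≥ 0. Consequently ψ_a is negatively pseudomonotone on X* with respect to X (i.e., ψ_a(x*, x) ≤ 0 and ψ_a(x, x*) ≥ 0 for all x* ∈ X*, x ∈ X). -/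
/-- The regularized Nikaido–Isoda function of a GNEP with loss functions `θ i`:
`ψ_a(x,y) = Σ_i [θ_i(x) − θ_i(x_{-i},y_i) − (a/2)‖x_i − y_i‖²]`. -/
noncomputable def psiReg {N : ℕ} {d : Fin N → ℕ}
    (θ : Fin N → (PiLp 2 fun i => EuclideanSpace ℝ (Fin (d i))) → ℝ) (a : ℝ)
    (x y : PiLp 2 fun i => EuclideanSpace ℝ (Fin (d i))) : ℝ :=
  ∑ i, (θ i x - θ i (WithLp.toLp 2 (Function.update x i (y i))) - a / 2 * ‖x i - y i‖ ^ 2)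

/-- The VI operator `F(x) = (∇_{x_i} θ_i(x))_i` of a jointly convex GNEP. -/
noncomputable def gnepF {N : ℕ} {d : Fin N → ℕ}
    (θ : Fin N → (PiLp 2 fun i => EuclideanSpace ℝ (Fin (d i))) → ℝ)
    (x : PiLp 2 fun i => EuclideanSpace ℝ (Fin (d i))) :
    PiLp 2 fun i => EuclideanSpace ℝ (Fin (d i)) :=
  WithLp.toLp 2 (fun i => gradient (fun zi => θ i (WithLp.toLp 2 (Function.update x i zi))) (x i))

open Filter Topology

theorem deriv_aux' {E : Type*} [NormedAddCommGroup E] [NormedSpace ℝ E]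
    (f : E → ℝ) (hf : ContDiff ℝ 1 f) (x w : E) :
    HasDerivAt (fun t : ℝ => f (x + t • w)) (fderiv ℝ f x w) 0 := by
  have h1 : HasDerivAt (fun t : ℝ => x + t • w) w 0 := by
    simpa using ((hasDerivAt_id (0:ℝ)).smul_const w).const_add x
  have h2 : HasFDerivAt f (fderiv ℝ f x) ((fun t : ℝ => x + t • w) 0) := by
    simpa using (hf.differentiable one_ne_zero x).hasFDerivAt
  exact h2.comp_hasDerivAt 0 h1

noncomputable def updPi' {N : ℕ} {d : Fin N → ℕ}
    (v : PiLp 2 fun i => EuclideanSpace ℝ (Fin (d i))) (i : Fin N) :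
    PiLp 2 fun i => EuclideanSpace ℝ (Fin (d i)) :=
  WithLp.toLp 2 (Function.update (WithLp.ofLp v) i 0)

noncomputable def updS' {N : ℕ} {d : Fin N → ℕ}
    (v : PiLp 2 fun i => EuclideanSpace ℝ (Fin (d i))) (i : Fin N) :
    PiLp 2 fun i => EuclideanSpace ℝ (Fin (d i)) :=
  WithLp.toLp 2 (Function.update (0 : (j : Fin N) → EuclideanSpace ℝ (Fin (d j))) i (v i))

theorem updPi'_add_updS' {N : ℕ} {d : Fin N → ℕ}
    (v : PiLp 2 fun i => EuclideanSpace ℝ (Fin (d i))) (i : Fin N) :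
    updPi' v i + updS' v i = v := by
  refine PiLp.ext fun j => ?_
  by_cases h : j = i
  · subst h; simp [updPi', updS']
  · simp [updPi', updS', Function.update_of_ne h]


theorem stmt8 {N : ℕ} {d : Fin N → ℕ}
    (X : Set (PiLp 2 fun i => EuclideanSpace ℝ (Fin (d i))))
    (hXne : X.Nonempty) (hXcl : IsClosed X) (hXconv : Convex ℝ X)
    (θ : Fin N → (PiLp 2 fun i => EuclideanSpace ℝ (Fin (d i))) → ℝ)
    (hθdiff : ∀ i, ContDiff ℝ 1 (θ i))
    (hθconv : ∀ i x, ConvexOn ℝ Set.univ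
      (fun zi : EuclideanSpace ℝ (Fin (d i)) => θ i (WithLp.toLp 2 (Function.update x i zi))))
    (a : ℝ) (ha : 0 < a)
    (hψconv : ∀ y ∈ X, ConvexOn ℝ X (fun x => psiReg θ a x y))
    (Xs : Set (PiLp 2 fun i => EuclideanSpace ℝ (Fin (d i))))
    (hXs : Xs = {xs | xs ∈ X ∧ ∀ y ∈ X, psiReg θ a xs y ≤ 0}) :
    ∀ xs ∈ Xs, ∀ x ∈ X, 0 ≤ psiReg θ a x xs ∧ psiReg θ a xs x ≤ 0 := by
  intro xs hxs x hx
  rw [hXs] at hxs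
  obtain ⟨hxsX, hNE⟩ := hxs
  refine ⟨?_, hNE x hx⟩
  set v : PiLp 2 fun i => EuclideanSpace ℝ (Fin (d i)) := x - xs with hv
  have hpsi0 : psiReg θ a xs xs = 0 := by
    unfold psiReg
    apply Finset.sum_eq_zero
    intro i _
    simp [Function.update_eq_self]
  set φ : ℝ → ℝ := fun t =>
    psiReg θ a (xs + t • v) xs + psiReg θ a xs (xs + t • v) with hφ
  have hφ0 : φ 0 = 0 := by simp [hφ, hpsi0]
  have hkey : ∀ t : ℝ, φ t = ∑ i,
      (θ i (xs + t • v) - θ i (xs + t • updPi' v i)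
        + (θ i xs - θ i (xs + t • updS' v i))
        - a * ‖v i‖ ^ 2 * t ^ 2) := by
    intro t
    simp only [hφ, psiReg]
    rw [← Finset.sum_add_distrib]
    apply Finset.sum_congr rfl
    intro i _
    have e1 : WithLp.toLp 2 (Function.update (xs + t • v) i (xs i))
        = xs + t • updPi' v i := by
      refine PiLp.ext fun j => ?_
      by_cases h : j = i
      · subst h; simp [updPi']
      · simp [updPi', Function.update_of_ne h]
    have e2 : WithLp.toLp 2 (Function.update xs i ((xs + t • v) i))
        = xs + t • updS' v i := by
      refine PiLp.ext fun j => ?_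
      by_cases h : j = i
      · subst h; simp [updS']
      · simp [updS', Function.update_of_ne h]
    have e3 : (xs + t • v) i - xs i = t • v i := by simp
    have e4 : xs i - (xs + t • v) i = -(t • v i) := by
      rw [eq_neg_iff_add_eq_zero, ← e3]; abel
    rw [e1, e2, e3, e4, norm_neg, norm_smul]
    simp only [Real.norm_eq_abs]
    rw [mul_pow, sq_abs]
    ring
  have hd : HasDerivAt φ 0 0 := by
    have hsum : HasDerivAt (fun t : ℝ => ∑ i,
        (θ i (xs + t • v) - θ i (xs + t • updPi' v i)
          + (θ i xs - θ i (xs + t • updS' v i))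
          - a * ‖v i‖ ^ 2 * t ^ 2)) (∑ _i : Fin N, (0:ℝ)) 0 := by
      apply HasDerivAt.fun_sum
      intro i _
      have h1 := deriv_aux' (θ i) (hθdiff i) xs v
      have h2 := deriv_aux' (θ i) (hθdiff i) xs (updPi' v i)
      have h3 := deriv_aux' (θ i) (hθdiff i) xs (updS' v i)
      have h4 : HasDerivAt (fun t : ℝ => a * ‖v i‖ ^ 2 * t ^ 2)
          ((a * ‖v i‖ ^ 2) * (2 * (0:ℝ) ^ 1)) 0 :=
        (hasDerivAt_pow 2 (0:ℝ)).const_mul _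
      have hz : fderiv ℝ (θ i) xs v - fderiv ℝ (θ i) xs (updPi' v i)
          + -(fderiv ℝ (θ i) xs (updS' v i))
          - (a * ‖v i‖ ^ 2) * (2 * (0:ℝ) ^ 1) = 0 := by
        have hadd : fderiv ℝ (θ i) xs (updPi' v i) + fderiv ℝ (θ i) xs (updS' v i)
            = fderiv ℝ (θ i) xs v := by
          rw [← map_add, updPi'_add_updS']
        simp only [pow_one, mul_zero, sub_zero]
        linarith
      have h5 := ((h1.sub h2).add (h3.const_sub (θ i xs))).sub h4
      rwa [hz] at h5
    have hfe : φ = fun t : ℝ => ∑ i,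
        (θ i (xs + t • v) - θ i (xs + t • updPi' v i)
          + (θ i xs - θ i (xs + t • updS' v i))
          - a * ‖v i‖ ^ 2 * t ^ 2) := funext hkey
    rw [hfe]
    simpa using hsum
  have hineq : ∀ t ∈ Set.Ioc (0:ℝ) 1, φ t ≤ t * psiReg θ a x xs := by
    intro t ht
    have hpt : xs + t • v = (1 - t) • xs + t • x := by
      rw [hv]; module
    have hmem : xs + t • v ∈ X := by
      rw [hpt]
      exact hXconv hxsX hx (by linarith [ht.2]) ht.1.le (by ring)
    have h1 : psiReg θ a (xs + t • v) xs
        ≤ (1 - t) * psiReg θ a xs xs + t * psiReg θ a x xs := by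
      rw [hpt]
      exact (hψconv xs hxsX).2 hxsX hx (by linarith [ht.2]) ht.1.le (by ring)
    have h2 : psiReg θ a xs (xs + t • v) ≤ 0 := hNE _ hmem
    rw [hpsi0] at h1
    calc φ t ≤ ((1 - t) * 0 + t * psiReg θ a x xs) + 0 := add_le_add h1 h2
      _ = t * psiReg θ a x xs := by ring
  have hslope : Tendsto (fun t => φ t / t) (𝓝[>] (0:ℝ)) (𝓝 0) := by
    have h := hasDerivAt_iff_tendsto_slope.mp hd
    have h' := h.mono_left (nhdsWithin_mono _ (fun t ht => ne_of_gt ht))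
    refine h'.congr (fun t => ?_)
    rw [slope_def_field, hφ0]
    ring
  refine le_of_tendsto hslope ?_
  filter_upwards [Ioc_mem_nhdsGT_of_mem (Set.left_mem_Ico.mpr one_pos)] with t ht
  rw [div_le_iff₀ ht.1]
  linarith [hineq t ht]
end

section
/- (Fejér monotonicity of the proximal sequence.) Let X ⊆ ℝⁿ be nonempty closed convex, ψ : X × X → ℝ with ψ(x,x) = 0, let X* = {x* ∈ X : ψ(x*,y) ≤ 0 ∀y ∈ X} be nonempty, and assume ψ(x, x*) ≥ 0 for all x ∈ X, x* ∈ X*. Let {x_k} ⊆ X satisfy the proximal inequality ψ(x_{k+1}, z) − (1/r_k)⟨z − x_{k+1}, x_{k+1} − x_k⟩ ≤ 0 for all z ∈ X, with r_k > 0. Then for every x* ∈ X*, ‖x_{k+1} − x_k‖² ≤ ‖x* − x_k‖² − ‖x* − x_{k+1}‖² for all k. -/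
theorem stmt11 {n : ℕ} (X : Set (EuclideanSpace ℝ (Fin n)))
    (hXne : X.Nonempty) (hXcl : IsClosed X) (hXconv : Convex ℝ X)
    (ψ : EuclideanSpace ℝ (Fin n) → EuclideanSpace ℝ (Fin n) → ℝ)
    (hdiag : ∀ x ∈ X, ψ x x = 0)
    (Xs : Set (EuclideanSpace ℝ (Fin n)))
    (hXs : Xs = {xs | xs ∈ X ∧ ∀ y ∈ X, ψ xs y ≤ 0}) (hXsne : Xs.Nonempty)
    (hpm : ∀ x ∈ X, ∀ xs ∈ Xs, 0 ≤ ψ x xs)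
    (x : ℕ → EuclideanSpace ℝ (Fin n)) (hxX : ∀ k, x k ∈ X)
    (r : ℕ → ℝ) (hr : ∀ k, 0 < r k)
    (hiter : ∀ k, ∀ z ∈ X,
      ψ (x (k + 1)) z - (1 / r k) * (inner ℝ (z - x (k + 1)) (x (k + 1) - x k) : ℝ) ≤ 0) :
    ∀ xs ∈ Xs, ∀ k, ‖x (k + 1) - x k‖ ^ 2 ≤ ‖xs - x k‖ ^ 2 - ‖xs - x (k + 1)‖ ^ 2 := by
  intro xs hxs k
  have hxsX : xs ∈ X := by rw [hXs] at hxs; exact hxs.1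
  have h1 := hiter k xs hxsX
  have h2 : (0:ℝ) ≤ ψ (x (k+1)) xs := hpm _ (hxX (k+1)) _ hxs
  have hinner : (0:ℝ) ≤ inner ℝ (xs - x (k+1)) (x (k+1) - x k) := by
    have h3 : (0:ℝ) ≤ (1 / r k) * (inner ℝ (xs - x (k+1)) (x (k+1) - x k) : ℝ) := by linarith
    have hrk : (0:ℝ) < 1 / r k := one_div_pos.mpr (hr k)
    exact le_of_not_gt fun h => absurd h3 (not_le.mpr (mul_neg_of_pos_of_neg hrk h))
  have hid : ‖xs - x k‖ ^ 2 =
      ‖xs - x (k+1)‖ ^ 2 + 2 * (inner ℝ (xs - x (k+1)) (x (k+1) - x k) : ℝ) + ‖x (k+1) - x k‖ ^ 2 := by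
    have : xs - x k = (xs - x (k+1)) + (x (k+1) - x k) := by abel
    rw [this, norm_add_sq_real]
  linarith
end

section
/- (Finite termination of the proximal point algorithm.) Let X ⊆ ℝⁿ be nonempty closed convex, ψ_a : X × X → ℝ with ψ_a(x,x) = 0 and ψ_a(·,y) convex for each y, let X* = {x* ∈ X : ψ_a(x*,y) ≤ 0 ∀y ∈ X} be nonempty closed convex, assume ψ_a(x,x*) ≥ 0 for all x ∈ X, x* ∈ X*, and assume ψ_a is linearly conditioned: there is γ > 0 with ψ_a(x, P_{X*}(x)) ≥ γ d(x, X*) for all x ∈ X. Let {x_k} satisfy ψ_a(x_{k+1}, z) ≤ (1/r_k)⟨z − x_{k+1}, x_{k+1} − x_k⟩ for all z ∈ X, with r_k > 0 and liminf r_k = r > 0. Then there exists k₀ ∈ ℕ such that x_k ∈ X* for all k > k₀. -/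
theorem stmt13 {n : ℕ} (X : Set (EuclideanSpace ℝ (Fin n)))
    (hXne : X.Nonempty) (hXcl : IsClosed X) (hXconv : Convex ℝ X)
    (ψ : EuclideanSpace ℝ (Fin n) → EuclideanSpace ℝ (Fin n) → ℝ)
    (hdiag : ∀ x ∈ X, ψ x x = 0)
    (hψconv : ∀ y ∈ X, ConvexOn ℝ X (fun x => ψ x y))
    (Xs : Set (EuclideanSpace ℝ (Fin n)))
    (hXs : Xs = {xs | xs ∈ X ∧ ∀ y ∈ X, ψ xs y ≤ 0})
    (hXsne : Xs.Nonempty) (hXscl : IsClosed Xs) (hXsconv : Convex ℝ Xs)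
    (hpm : ∀ x ∈ X, ∀ xs ∈ Xs, 0 ≤ ψ x xs)
    (proj : EuclideanSpace ℝ (Fin n) → EuclideanSpace ℝ (Fin n))
    (hproj : ∀ x, proj x ∈ Xs ∧ ∀ w ∈ Xs, dist x (proj x) ≤ dist x w)
    (γ : ℝ) (hγ : 0 < γ)
    (hlin : ∀ x ∈ X, γ * Metric.infDist x Xs ≤ ψ x (proj x))
    (x : ℕ → EuclideanSpace ℝ (Fin n)) (hxX : ∀ k, x k ∈ X)
    (r : ℕ → ℝ) (hr : ∀ k, 0 < r k) (rlim : ℝ) (hrlim : 0 < rlim)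
    (hliminf : Filter.atTop.liminf r = rlim)
    (hiter : ∀ k, ∀ z ∈ X,
      ψ (x (k + 1)) z ≤ (1 / r k) * (inner ℝ (z - x (k + 1)) (x (k + 1) - x k) : ℝ)) :
    ∃ k₀ : ℕ, ∀ k > k₀, x k ∈ Xs := by
  classical
  obtain ⟨c, hc⟩ := hXsne
  have hcX : c ∈ X := by rw [hXs] at hc; exact hc.1
  -- Step 1: Fejér monotonicity
  have key : ∀ k, 0 ≤ (inner ℝ (c - x (k+1)) (x (k+1) - x k) : ℝ) := by
    intro k
    have h1 := hiter k c hcX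
    have h2 := hpm (x (k+1)) (hxX _) c hc
    have h3 : (0:ℝ) ≤ (1 / r k) * (inner ℝ (c - x (k+1)) (x (k+1) - x k) : ℝ) :=
      le_trans h2 h1
    have hrk := hr k
    by_contra hcon
    push_neg at hcon
    have : (1 / r k) * (inner ℝ (c - x (k+1)) (x (k+1) - x k) : ℝ) < 0 :=
      mul_neg_of_pos_of_neg (by positivity) hcon
    linarith
  set a : ℕ → ℝ := fun k => ‖x k - c‖^2 with ha
  have hstep : ∀ k, ‖x (k+1) - x k‖^2 ≤ a k - a (k+1) := by
    intro k
    have expand : a k = a (k+1) + ‖x (k+1) - x k‖^2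
        + 2 * (inner ℝ (c - x (k+1)) (x (k+1) - x k) : ℝ) := by
      simp only [ha]
      have hrw : x k - c = (x k - x (k+1)) + (x (k+1) - c) := by abel
      rw [hrw, norm_add_sq_real]
      have hin : (inner ℝ (x k - x (k+1)) (x (k+1) - c) : ℝ)
          = (inner ℝ (c - x (k+1)) (x (k+1) - x k) : ℝ) := by
        rw [show x k - x (k+1) = -(x (k+1) - x k) by abel,
            show x (k+1) - c = -(c - x (k+1)) by abel, inner_neg_neg, real_inner_comm]
      rw [hin, norm_sub_rev (x k)]
      ring
    have := key k
    linarith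
  have hanti : Antitone a := by
    apply antitone_nat_of_succ_le
    intro k
    have := hstep k
    nlinarith [sq_nonneg ‖x (k+1) - x k‖]
  have hbdd : BddBelow (Set.range a) := ⟨0, by rintro _ ⟨k, rfl⟩; positivity⟩
  have haconv : Filter.Tendsto a Filter.atTop (nhds (⨅ k, a k)) :=
    tendsto_atTop_ciInf hanti hbdd
  have hdiff : Filter.Tendsto (fun k => a k - a (k+1)) Filter.atTop (nhds 0) := by
    have h := haconv.sub (haconv.comp (Filter.tendsto_add_atTop_nat 1))
    simpa using h
  have hsq : Filter.Tendsto (fun k => ‖x (k+1) - x k‖^2) Filter.atTop (nhds 0) :=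
    squeeze_zero (fun k => sq_nonneg _) hstep hdiff
  have hnorm : Filter.Tendsto (fun k => ‖x (k+1) - x k‖) Filter.atTop (nhds 0) := by
    have h := hsq.sqrt
    simpa [Real.sqrt_sq (norm_nonneg _)] using h
  -- Step 2: eventually r k > rlim / 2
  have hrbdd : Filter.IsBoundedUnder (· ≥ ·) Filter.atTop r :=
    ⟨0, Filter.eventually_map.mpr (Filter.Eventually.of_forall fun k => (hr k).le)⟩
  have hrev : ∀ᶠ k in Filter.atTop, rlim / 2 < r k := by
    apply Filter.eventually_lt_of_lt_liminf _ hrbdd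
    rw [hliminf]; linarith
  have hnev : ∀ᶠ k in Filter.atTop, ‖x (k+1) - x k‖ < γ * rlim / 2 :=
    hnorm.eventually_lt_const (by positivity)
  have hcomb : ∀ᶠ k in Filter.atTop, (1 / r k) * ‖x (k+1) - x k‖ < γ := by
    filter_upwards [hrev, hnev] with k h1 h2
    have hrk := hr k
    have hinv : 1 / r k < 2 / rlim := by
      rw [div_lt_div_iff₀ hrk hrlim]; linarith
    have hnn : 0 ≤ ‖x (k+1) - x k‖ := norm_nonneg _
    have h2' : (2 / rlim) * ‖x (k+1) - x k‖ < γ := by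
      rw [div_mul_eq_mul_div, div_lt_iff₀ hrlim]
      nlinarith
    calc (1 / r k) * ‖x (k+1) - x k‖ ≤ (2 / rlim) * ‖x (k+1) - x k‖ :=
          mul_le_mul_of_nonneg_right hinv.le hnn
      _ < γ := h2'
  obtain ⟨N, hN⟩ := Filter.eventually_atTop.mp hcomb
  refine ⟨N, fun k hk => ?_⟩
  obtain ⟨m, rfl⟩ : ∃ m, k = m + 1 := ⟨k - 1, by omega⟩
  have hm : m ≥ N := by omega
  by_contra hx
  set j := x (m+1) with hj
  have hd : 0 < Metric.infDist j Xs := (hXscl.notMem_iff_infDist_pos ⟨c, hc⟩).mp hx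
  have hdeq : Metric.infDist j Xs = dist j (proj j) := by
    refine le_antisymm (Metric.infDist_le_dist_of_mem (hproj j).1) ?_
    haveI : Nonempty ↑Xs := ⟨⟨c, hc⟩⟩
    rw [Metric.infDist_eq_iInf]
    exact le_ciInf fun w => (hproj j).2 w w.2
  have hprojX : proj j ∈ X := by
    have h := (hproj j).1; rw [hXs] at h; exact h.1
  have h1 := hlin j (hxX _)
  have h2 := hiter m (proj j) hprojX
  have h3 : (inner ℝ (proj j - j) (j - x m) : ℝ) ≤ ‖proj j - j‖ * ‖j - x m‖ :=
    real_inner_le_norm _ _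
  have h4 : ‖proj j - j‖ = Metric.infDist j Xs := by
    rw [hdeq, dist_eq_norm, norm_sub_rev]
  rw [h4] at h3
  have h5 : (1 / r m) * ‖j - x m‖ < γ := hN m hm
  have hrinv : (0:ℝ) ≤ 1 / r m := div_nonneg zero_le_one (hr m).le
  nlinarith [mul_le_mul_of_nonneg_left h3 hrinv, mul_lt_mul_of_pos_left h5 hd,
    Metric.infDist_nonneg (x := j) (s := Xs)]
end

section
/- (Iteration complexity bound.) In the setting of the finite termination theorem, additionally assume 1/r_k ∈ (0, ε) for all k, for some ε > 0. Let k₀ be the least natural number such that ‖x_{k+1} − x_k‖ < γ/ε for all k ≥ k₀. Then x_k ∈ X* for all k > k₀ and k₀ ≤ d(x₀, X*)²·ε²/γ². -/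
theorem stmt14 {n : ℕ} (X : Set (EuclideanSpace ℝ (Fin n)))
    (hXne : X.Nonempty) (hXcl : IsClosed X) (hXconv : Convex ℝ X)
    (ψ : EuclideanSpace ℝ (Fin n) → EuclideanSpace ℝ (Fin n) → ℝ)
    (hdiag : ∀ x ∈ X, ψ x x = 0)
    (Xs : Set (EuclideanSpace ℝ (Fin n)))
    (hXs : Xs = {xs | xs ∈ X ∧ ∀ y ∈ X, ψ xs y ≤ 0})
    (hXsne : Xs.Nonempty) (hXscl : IsClosed Xs) (hXsconv : Convex ℝ Xs)
    (hpm : ∀ x ∈ X, ∀ xs ∈ Xs, 0 ≤ ψ x xs)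
    (proj : EuclideanSpace ℝ (Fin n) → EuclideanSpace ℝ (Fin n))
    (hproj : ∀ x, proj x ∈ Xs ∧ ∀ w ∈ Xs, dist x (proj x) ≤ dist x w)
    (γ : ℝ) (hγ : 0 < γ)
    (hlin : ∀ x ∈ X, γ * Metric.infDist x Xs ≤ ψ x (proj x))
    (x : ℕ → EuclideanSpace ℝ (Fin n)) (hxX : ∀ k, x k ∈ X)
    (r : ℕ → ℝ) (hr : ∀ k, 0 < r k)
    (ε : ℝ) (hε : 0 < ε) (hrε : ∀ k, 1 / r k < ε)
    (hiter : ∀ k, ∀ z ∈ X,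
      ψ (x (k + 1)) z ≤ (1 / r k) * (inner ℝ (z - x (k + 1)) (x (k + 1) - x k) : ℝ))
    (k₀ : ℕ)
    (hk₀ : IsLeast {m : ℕ | ∀ k ≥ m, ‖x (k + 1) - x k‖ < γ / ε} k₀) :
    (∀ k > k₀, x k ∈ Xs) ∧
      (k₀ : ℝ) ≤ Metric.infDist (x 0) Xs ^ 2 * ε ^ 2 / γ ^ 2 := by
  -- Xs ⊆ X
  have hXsX : ∀ y ∈ Xs, y ∈ X := by
    intro y hy; rw [hXs] at hy; exact hy.1
  -- infDist is realized by proj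
  have hinf : ∀ y, Metric.infDist y Xs = dist y (proj y) := by
    intro y
    refine le_antisymm (Metric.infDist_le_dist_of_mem (hproj y).1) ?_
    by_contra h
    push_neg at h
    obtain ⟨w, hw, hlt⟩ := (Metric.infDist_lt_iff hXsne).mp h
    exact absurd ((hproj y).2 w hw) (not_le.mpr hlt)
  -- Step A : small step implies next iterate is a solution
  have stepA : ∀ k, ‖x (k + 1) - x k‖ < γ / ε → x (k + 1) ∈ Xs := by
    intro k hlt
    set p := proj (x (k + 1)) with hp
    have hpXs : p ∈ Xs := (hproj (x (k + 1))).1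
    have hpX : p ∈ X := hXsX p hpXs
    have hD : Metric.infDist (x (k + 1)) Xs = ‖x (k + 1) - p‖ := by
      rw [hinf, dist_eq_norm]
    have h1 : γ * ‖x (k + 1) - p‖ ≤ ψ (x (k + 1)) p := by
      rw [← hD]; exact hlin _ (hxX _)
    have h2 := hiter k p hpX
    have h3 : (inner ℝ (p - x (k + 1)) (x (k + 1) - x k) : ℝ) ≤
        ‖x (k + 1) - p‖ * ‖x (k + 1) - x k‖ := by
      calc (inner ℝ (p - x (k + 1)) (x (k + 1) - x k) : ℝ)
          ≤ ‖p - x (k + 1)‖ * ‖x (k + 1) - x k‖ := real_inner_le_norm _ _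
        _ = ‖x (k + 1) - p‖ * ‖x (k + 1) - x k‖ := by rw [norm_sub_rev]
    have hrk : 0 < 1 / r k := one_div_pos.mpr (hr k)
    have hN : (0 : ℝ) ≤ ‖x (k + 1) - x k‖ := norm_nonneg _
    have hDn : (0 : ℝ) ≤ ‖x (k + 1) - p‖ := norm_nonneg _
    have hεN : ε * ‖x (k + 1) - x k‖ < γ := by
      calc ε * ‖x (k + 1) - x k‖ < ε * (γ / ε) := by
            exact mul_lt_mul_of_pos_left hlt hε
        _ = γ := by field_simp
    have hzero : ‖x (k + 1) - p‖ = 0 := by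
      by_contra hne
      have hDpos : 0 < ‖x (k + 1) - p‖ := lt_of_le_of_ne hDn (Ne.symm hne)
      have hkey : γ * ‖x (k + 1) - p‖ ≤
          (1 / r k) * (‖x (k + 1) - p‖ * ‖x (k + 1) - x k‖) := by
        refine h1.trans (h2.trans ?_)
        exact mul_le_mul_of_nonneg_left h3 hrk.le
      have t1 : (1 / r k) * (‖x (k + 1) - p‖ * ‖x (k + 1) - x k‖) ≤
          ε * (‖x (k + 1) - p‖ * ‖x (k + 1) - x k‖) :=
        mul_le_mul_of_nonneg_right (hrε k).le (mul_nonneg hDn hN)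
      have t2 : ε * (‖x (k + 1) - p‖ * ‖x (k + 1) - x k‖) =
          ‖x (k + 1) - p‖ * (ε * ‖x (k + 1) - x k‖) := by ring
      have t3 : ‖x (k + 1) - p‖ * (ε * ‖x (k + 1) - x k‖) <
          ‖x (k + 1) - p‖ * γ := mul_lt_mul_of_pos_left hεN hDpos
      nlinarith
    have : Metric.infDist (x (k + 1)) Xs = 0 := by rw [hD, hzero]
    exact (hXscl.mem_iff_infDist_zero hXsne).mpr this
  -- Fejér monotonicity
  have fejer : ∀ k, ∀ xs ∈ Xs,
      ‖x (k + 1) - xs‖ ^ 2 + ‖x (k + 1) - x k‖ ^ 2 ≤ ‖x k - xs‖ ^ 2 := by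
    intro k xs hxs
    have hxsX : xs ∈ X := hXsX xs hxs
    have h0 : 0 ≤ ψ (x (k + 1)) xs := hpm _ (hxX _) _ hxs
    have h2 := hiter k xs hxsX
    have hrk : 0 < 1 / r k := one_div_pos.mpr (hr k)
    have hinner : 0 ≤ (inner ℝ (xs - x (k + 1)) (x (k + 1) - x k) : ℝ) := by
      nlinarith [h0.trans h2]
    have hdecomp : x k - xs = (x k - x (k + 1)) + (x (k + 1) - xs) := by abel
    have hexp : ‖x k - xs‖ ^ 2 = ‖x k - x (k + 1)‖ ^ 2 +
        2 * (inner ℝ (x k - x (k + 1)) (x (k + 1) - xs) : ℝ) + ‖x (k + 1) - xs‖ ^ 2 := by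
      rw [hdecomp, norm_add_sq_real]
    have hieq : (inner ℝ (x k - x (k + 1)) (x (k + 1) - xs) : ℝ) =
        (inner ℝ (xs - x (k + 1)) (x (k + 1) - x k) : ℝ) := by
      have : x k - x (k + 1) = -(x (k + 1) - x k) := by abel
      rw [this]
      have : x (k + 1) - xs = -(xs - x (k + 1)) := by abel
      rw [this, inner_neg_neg, real_inner_comm]
    have hnrm : ‖x k - x (k + 1)‖ = ‖x (k + 1) - x k‖ := norm_sub_rev _ _
    rw [hexp, hieq, hnrm]
    linarith
  -- once in Xs, the sequence is constant
  have constant : ∀ m, x (m + 1) ∈ Xs → ∀ j, x (m + 1 + j) = x (m + 1) := by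
    intro m hm j
    induction j with
    | zero => rfl
    | succ j ih =>
      have h := fejer (m + 1 + j) (x (m + 1)) hm
      rw [ih] at h
      simp only [sub_self, norm_zero] at h
      have h1 : ‖x (m + 1 + j + 1) - x (m + 1)‖ ^ 2 ≤ 0 := by
        nlinarith [sq_nonneg ‖x (m + 1 + j + 1) - x (m + 1 + j)‖]
      have h2 : ‖x (m + 1 + j + 1) - x (m + 1)‖ = 0 := by
        nlinarith [norm_nonneg (x (m + 1 + j + 1) - x (m + 1))]
      have : x (m + 1 + j + 1) - x (m + 1) = 0 := norm_eq_zero.mp h2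
      exact sub_eq_zero.mp this
  -- before k₀, all steps are large
  have stepD : ∀ v < k₀, γ / ε ≤ ‖x (v + 1) - x v‖ := by
    intro v hv
    by_contra h
    push_neg at h
    have hvXs : x (v + 1) ∈ Xs := stepA v h
    have hvS : v ∈ {m : ℕ | ∀ k ≥ m, ‖x (k + 1) - x k‖ < γ / ε} := by
      intro k hk
      rcases eq_or_lt_of_le hk with rfl | hk'
      · exact h
      · have hk1 : v + 1 ≤ k := hk'
        obtain ⟨j, rfl⟩ := Nat.exists_eq_add_of_le hk1
        have e1 : x (v + 1 + j) = x (v + 1) := constant v hvXs j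
        have e2 : x (v + 1 + j + 1) = x (v + 1) := constant v hvXs (j + 1)
        rw [e1, e2, sub_self, norm_zero]
        positivity
    exact absurd (hk₀.2 hvS) (not_le.mpr hv)
  constructor
  · -- first claim
    intro k hk
    obtain ⟨j, rfl⟩ := Nat.exists_eq_add_of_lt hk
    exact stepA (k₀ + j) (hk₀.1 (k₀ + j) (Nat.le_add_right _ _))
  · -- complexity bound
    set p₀ := proj (x 0) with hp₀
    have hp₀Xs : p₀ ∈ Xs := (hproj (x 0)).1
    have hsum : ∀ m, (∑ v ∈ Finset.range m, ‖x (v + 1) - x v‖ ^ 2)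
        + ‖x m - p₀‖ ^ 2 ≤ ‖x 0 - p₀‖ ^ 2 := by
      intro m
      induction m with
      | zero => simp
      | succ m ih =>
        rw [Finset.sum_range_succ]
        have h := fejer m p₀ hp₀Xs
        linarith
    have hsum' : (∑ v ∈ Finset.range k₀, ‖x (v + 1) - x v‖ ^ 2) ≤ ‖x 0 - p₀‖ ^ 2 := by
      have := hsum k₀
      nlinarith [sq_nonneg ‖x k₀ - p₀‖]
    have hlb : (k₀ : ℝ) * (γ / ε) ^ 2 ≤ ∑ v ∈ Finset.range k₀, ‖x (v + 1) - x v‖ ^ 2 := by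
      have : ∀ v ∈ Finset.range k₀, (γ / ε) ^ 2 ≤ ‖x (v + 1) - x v‖ ^ 2 := by
        intro v hv
        have hv' := stepD v (Finset.mem_range.mp hv)
        have hge : (0 : ℝ) ≤ γ / ε := by positivity
        exact pow_le_pow_left₀ hge hv' 2
      calc (k₀ : ℝ) * (γ / ε) ^ 2
          = ∑ _v ∈ Finset.range k₀, (γ / ε) ^ 2 := by
            rw [Finset.sum_const, Finset.card_range, nsmul_eq_mul]
        _ ≤ ∑ v ∈ Finset.range k₀, ‖x (v + 1) - x v‖ ^ 2 := Finset.sum_le_sum this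
    have hd : Metric.infDist (x 0) Xs = ‖x 0 - p₀‖ := by rw [hinf, dist_eq_norm]
    rw [hd]
    have hkey : (k₀ : ℝ) * (γ / ε) ^ 2 ≤ ‖x 0 - p₀‖ ^ 2 := hlb.trans hsum'
    rw [div_pow] at hkey
    rw [le_div_iff₀ (by positivity)]
    calc (k₀ : ℝ) * γ ^ 2 = ((k₀ : ℝ) * (γ ^ 2 / ε ^ 2)) * ε ^ 2 := by
          field_simp
      _ ≤ ‖x 0 - p₀‖ ^ 2 * ε ^ 2 := by
          exact mul_le_mul_of_nonneg_right hkey (by positivity)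
end
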